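/- The class of subsets S of a Polish space X admitting a simultaneous continuous reduction to (L(C), L(C from N)) with the ⊤_S side-condition is closed under countable unions: if S = ⋃ᵢ Sᵢ and each Sᵢ has witnessing reductions fᵢ, then the map f placing f₀(x), f₁(x), f₂(x), ... as the right-diverging subtrees along the all-∨ leftmost branch is continuous and witnesses the property for S. -/

import Mathlib

/-- The alphabet {a, b, ∨, ¬}. -/
inductive A4 | la | lb | lor | lneg
deriving DecidableEq

instance : TopologicalSpace A4 := ⊥
instance : DiscreteTopology A4 := ⟨rfl⟩

/-- Infinite binary trees over {a, b, ∨, ¬}. -/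
abbrev Tree4 := List (Fin 2) → A4

/-- The length-`n` prefix of a branch. -/
def pre (β : ℕ → Fin 2) (n : ℕ) : List (Fin 2) := List.ofFn (fun i : Fin n => β i)

/-- `r` occurs infinitely often in the sequence `g`. -/
def InfOften (g : ℕ → ℕ) (r : ℕ) : Prop := ∀ m, ∃ n ≥ m, g n = r

/-- Parity condition: the maximal value occurring infinitely often is even. -/
def ParityOk (g : ℕ → ℕ) : Prop :=
  ∃ r, Even r ∧ InfOften g r ∧ ∀ r', InfOften g r' → r' ≤ r

/-- States of the unambiguous automaton `C` (including the states of `A_G` and `A_L`). -/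
inductive QC
  | P | N | Pv | Nv | Tv | TS | Top
  | g1 | g2 | top2 | bot1 | l1 | l0 | top0
deriving DecidableEq

def rankC : QC → ℕ
  | .P => 1 | .N => 1 | .Pv => 1 | .TS => 1
  | .Nv => 0 | .Tv => 0 | .Top => 0
  | .g1 => 1 | .g2 => 2 | .top2 => 2 | .bot1 => 1 | .l1 => 1 | .l0 => 0 | .top0 => 0

/-- Transition relation of `C`. -/
def deltaC : QC → A4 → QC → QC → Prop := fun q a q1 q2 =>
  match q, a with
  -- the formula layer
  | .P, .lor | .Pv, .lor => (q1 = .Tv ∧ q2 = .P) ∨ (q1 = .Pv ∧ q2 = .N)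
  | .N, .lor | .Nv, .lor => q1 = .Nv ∧ q2 = .N
  | .Tv, .lor | .TS, .lor => q1 = .Tv ∧ q2 = .TS
  | .P, .lneg => q1 = .Top ∧ q2 = .N
  | .N, .lneg => q1 = .Top ∧ q2 = .P
  | .TS, .lneg => q1 = .Top ∧ q2 = .TS
  | .TS, .la | .TS, .lb => q1 = .Top ∧ q2 = .Top
  | .Top, _ => q1 = .Top ∧ q2 = .Top
  -- on a or b, state P acts as g₁ of A_G, state N acts as l₁ of A_L
  | .P, .la => (q1 = .g2 ∧ q2 = .top2) ∨ (q1 = .l1 ∧ q2 = .g1)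
  | .P, .lb => q1 = .bot1 ∧ q2 = .bot1
  | .N, .la => q1 = .l1 ∧ q2 = .l0
  | .N, .lb => q1 = .top0 ∧ q2 = .top0
  -- the A_G component (letters other than a are treated like b)
  | .g1, .la | .g2, .la => (q1 = .g2 ∧ q2 = .top2) ∨ (q1 = .l1 ∧ q2 = .g1)
  | .g1, _ | .g2, _ => q1 = .bot1 ∧ q2 = .bot1
  -- the A_L component
  | .l1, .la | .l0, .la => q1 = .l1 ∧ q2 = .l0
  | .l1, _ | .l0, _ => q1 = .top0 ∧ q2 = .top0
  | .top2, _ => q1 = .top2 ∧ q2 = .top2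
  | .bot1, _ => q1 = .bot1 ∧ q2 = .bot1
  | .top0, _ => q1 = .top0 ∧ q2 = .top0
  -- no transitions in the remaining cases
  | _, _ => False

/-- A run of `C` on `t` starting in state `q0`. -/
def IsRunC (t : Tree4) (q0 : QC) (ρ : List (Fin 2) → QC) : Prop :=
  ρ [] = q0 ∧ ∀ v : List (Fin 2), deltaC (ρ v) (t v) (ρ (v ++ [0])) (ρ (v ++ [1]))

/-- An accepting run: the parity condition holds on every branch. -/
def AccRunC (t : Tree4) (q0 : QC) (ρ : List (Fin 2) → QC) : Prop :=
  IsRunC t q0 ρ ∧ ∀ β : ℕ → Fin 2, ParityOk (fun n => rankC (ρ (pre β n)))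

/-- `t` is accepted by `C` started in state `q0`. -/
def AcceptsFrom (q0 : QC) (t : Tree4) : Prop := ∃ ρ, AccRunC t q0 ρ

/-- The tree whose leftmost branch is labelled entirely ∨ and whose `i`-th
right-diverging subtree is `g i`. -/
def unionTree : (ℕ → Tree4) → List (Fin 2) → A4
  | _, [] => A4.lor
  | g, d :: w => if d = 0 then unionTree (fun n => g (n + 1)) w else g 0 w

/- ### Auxiliary lemmas -/

lemma fin2_cases (d : Fin 2) : d = 0 ∨ d = 1 := by
  fin_cases d
  · exact Or.inl rfl
  · exact Or.inr rfl

lemma infOften_shift (g : ℕ → ℕ) (m r : ℕ) :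
    InfOften (fun n => g (n + m)) r ↔ InfOften g r := by
  constructor
  · intro h M
    obtain ⟨n, hn, he⟩ := h M
    exact ⟨n + m, le_trans hn (Nat.le_add_right _ _), he⟩
  · intro h M
    obtain ⟨n, hn, he⟩ := h (M + m)
    refine ⟨n - m, ?_, ?_⟩
    · omega
    · have : n - m + m = n := by omega
      simp [this, he]

lemma parityOk_shift (g : ℕ → ℕ) (m : ℕ) :
    ParityOk (fun n => g (n + m)) ↔ ParityOk g := by
  unfold ParityOk
  refine exists_congr fun r => and_congr_right fun _ => ?_
  exact and_congr (infOften_shift g m r)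
    (forall_congr' fun r' => imp_congr (infOften_shift g m r') Iff.rfl)

lemma parityOk_of_eventually_zero (g : ℕ → ℕ) (m : ℕ) (h : ∀ n ≥ m, g n = 0) :
    ParityOk g := by
  refine ⟨0, Even.zero, ?_, ?_⟩
  · intro M
    exact ⟨max M m, le_max_left _ _, h _ (le_max_right _ _)⟩
  · intro r' hr'
    obtain ⟨n, hn, he⟩ := hr' m
    have := h n hn
    omega

lemma pre_succ (β : ℕ → Fin 2) (n : ℕ) : pre β (n + 1) = pre β n ++ [β n] := by
  rw [pre, List.ofFn_succ']
  simp [pre, List.concat_eq_append]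

lemma pre_add (β : ℕ → Fin 2) (a b : ℕ) :
    pre β (a + b) = pre β a ++ pre (fun j => β (a + j)) b := by
  induction b with
  | zero => simp [pre]
  | succ b ih =>
    rw [show a + (b + 1) = (a + b) + 1 from rfl, pre_succ, ih, pre_succ,
      List.append_assoc]

lemma pre_eq_replicate (β : ℕ → Fin 2) (n : ℕ) (h : ∀ j < n, β j = 0) :
    pre β n = List.replicate n 0 := by
  induction n with
  | zero => simp [pre]
  | succ n ih =>
    rw [pre_succ, ih (fun j hj => h j (Nat.lt_succ_of_lt hj)), h n (Nat.lt_succ_self n),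
      ← List.replicate_succ']

/- ### Restriction of accepting runs to subtrees -/

lemma accRun_cons (t : Tree4) (q : QC) (ρ : List (Fin 2) → QC) (d : Fin 2)
    (h : AccRunC t q ρ) :
    AccRunC (fun w => t (d :: w)) (ρ [d]) (fun w => ρ (d :: w)) := by
  refine ⟨⟨rfl, fun v => h.1.2 (d :: v)⟩, ?_⟩
  intro β
  set β' : ℕ → Fin 2 := fun n => if n = 0 then d else β (n - 1) with hβ'
  have key : ∀ n, pre β' (n + 1) = d :: pre β n := by
    intro n
    simp [pre, List.ofFn_succ, hβ']
  have hp : ParityOk (fun n => rankC (ρ (pre β' (n + 1)))) :=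
    (parityOk_shift (fun n => rankC (ρ (pre β' n))) 1).mpr (h.2 β')
  show ParityOk (fun n => rankC (ρ (d :: pre β n)))
  have e : (fun n => rankC (ρ (d :: pre β n))) = fun n => rankC (ρ (pre β' (n + 1))) := by
    funext n; rw [key]
  rw [e]; exact hp

lemma accRun_restrict (t : Tree4) (q : QC) (ρ : List (Fin 2) → QC)
    (h : AccRunC t q ρ) (v : List (Fin 2)) :
    AccRunC (fun w => t (v ++ w)) (ρ v) (fun w => ρ (v ++ w)) := by
  induction v generalizing t q ρ with
  | nil =>
    simp only [List.nil_append, h.1.1]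
    exact h
  | cons d v ih =>
    have h' := accRun_cons t q ρ d h
    exact ih _ _ _ h' 

lemma acceptsFrom_subtree (t : Tree4) (q : QC) (ρ : List (Fin 2) → QC)
    (h : AccRunC t q ρ) (v : List (Fin 2)) :
    AcceptsFrom (ρ v) (fun w => t (v ++ w)) :=
  ⟨_, accRun_restrict t q ρ h v⟩

/- ### Structure of the union tree -/

lemma unionTree_replicate (g : ℕ → Tree4) (k : ℕ) :
    unionTree g (List.replicate k 0) = A4.lor := by
  induction k generalizing g with
  | zero => rfl
  | succ k ih => simpa [List.replicate_succ, unionTree] using ih (fun n => g (n + 1))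

lemma unionTree_spine_one (g : ℕ → Tree4) (k : ℕ) (w : List (Fin 2)) :
    unionTree g (List.replicate k 0 ++ 1 :: w) = g k w := by
  induction k generalizing g with
  | zero => simp [unionTree]
  | succ k ih => simpa [List.replicate_succ, unionTree] using ih (fun n => g (n + 1))

lemma subtree_eq (g : ℕ → Tree4) (k : ℕ) :
    (fun w => unionTree g ((List.replicate k 0 ++ [1]) ++ w)) = g k := by
  funext w
  rw [List.append_assoc]
  exact unionTree_spine_one g k w

/- ### The glued run -/

def glue (s : ℕ → QC) (r : ℕ → List (Fin 2) → QC) : List (Fin 2) → QC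
  | [] => s 0
  | d :: w => if d = 0 then glue (fun n => s (n + 1)) (fun n => r (n + 1)) w else r 0 w

lemma glue_replicate (s : ℕ → QC) (r : ℕ → List (Fin 2) → QC) (k : ℕ) :
    glue s r (List.replicate k 0) = s k := by
  induction k generalizing s r with
  | zero => rfl
  | succ k ih => simpa [List.replicate_succ, glue] using ih (fun n => s (n + 1)) (fun n => r (n + 1))

lemma glue_spine_one (s : ℕ → QC) (r : ℕ → List (Fin 2) → QC) (k : ℕ) (w : List (Fin 2)) :
    glue s r (List.replicate k 0 ++ 1 :: w) = r k w := by
  induction k generalizing s r with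
  | zero => simp [glue]
  | succ k ih => simpa [List.replicate_succ, glue] using ih (fun n => s (n + 1)) (fun n => r (n + 1))

lemma glue_step (v : List (Fin 2)) (g : ℕ → Tree4) (s : ℕ → QC)
    (r : ℕ → List (Fin 2) → QC)
    (hs : ∀ k, deltaC (s k) A4.lor (s (k + 1)) (r k []))
    (hr : ∀ k w, deltaC (r k w) (g k w) (r k (w ++ [0])) (r k (w ++ [1]))) :
    deltaC (glue s r v) (unionTree g v) (glue s r (v ++ [0])) (glue s r (v ++ [1])) := by
  induction v generalizing g s r with
  | nil => simpa [glue, unionTree] using hs 0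
  | cons d w ih =>
    rcases fin2_cases d with rfl | rfl
    · simpa [glue, unionTree] using
        ih (fun n => g (n + 1)) (fun n => s (n + 1)) (fun n => r (n + 1))
          (fun k => hs (k + 1)) (fun k => hr (k + 1))
    · simpa [glue, unionTree] using hr 0 w

lemma glue_acc (g : ℕ → Tree4) (s : ℕ → QC) (r : ℕ → List (Fin 2) → QC)
    (hs : ∀ k, deltaC (s k) A4.lor (s (k + 1)) (r k []))
    (hr : ∀ k, AccRunC (g k) (r k []) (r k))
    (hpar : ParityOk (fun n => rankC (s n))) :
    AcceptsFrom (s 0) (unionTree g) := by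
  refine ⟨glue s r, ⟨rfl, fun v => glue_step v g s r hs (fun k => (hr k).1.2)⟩, ?_⟩
  intro β
  by_cases hb : ∀ n, β n = 0
  · have e : (fun n => rankC (glue s r (pre β n))) = fun n => rankC (s n) := by
      funext n
      rw [pre_eq_replicate β n (fun j _ => hb j), glue_replicate]
    rw [e]; exact hpar
  · push_neg at hb
    obtain ⟨n0, hn0⟩ := hb
    have hex : ∃ n, β n ≠ 0 := ⟨n0, hn0⟩
    set m := Nat.find hex with hm
    have hm1 : β m = 1 := by
      rcases fin2_cases (β m) with h | h
      · exact absurd h (Nat.find_spec hex)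
      · exact h
    have hlt : ∀ j < m, β j = 0 := fun j hj => by
      have := Nat.find_min hex hj
      simpa using this
    set β' : ℕ → Fin 2 := fun j => β (m + 1 + j) with hβ'
    have key : ∀ n, pre β ((m + 1) + n) = List.replicate m 0 ++ 1 :: pre β' n := by
      intro n
      rw [pre_add β (m + 1) n]
      have : pre β (m + 1) = List.replicate m 0 ++ [1] := by
        rw [pre_succ, pre_eq_replicate β m hlt, hm1]
      rw [this, List.append_assoc]
      rfl
    rw [← parityOk_shift _ (m + 1)]
    have e : (fun n => rankC (glue s r (pre β (n + (m + 1))))) =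
        fun n => rankC (r m (pre β' n)) := by
      funext n
      rw [Nat.add_comm n (m + 1), key, glue_spine_one]
    rw [e]
    exact (hr m).2 β'

/- ### Continuity -/

lemma unionTree_continuous {X : Type} [TopologicalSpace X] (v : List (Fin 2))
    (f : ℕ → X → Tree4) (hf : ∀ i, Continuous (f i)) :
    Continuous (fun x => unionTree (fun i => f i x) v) := by
  induction v generalizing f with
  | nil => exact continuous_const
  | cons d w ih =>
    rcases fin2_cases d with rfl | rfl
    · simpa [unionTree] using ih (fun i => f (i + 1)) (fun i => hf (i + 1))
    · simpa [unionTree, Function.comp_def] using (continuous_apply w).comp (hf 0)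

/-- Closure of the simultaneous-reduction property (*) under countable unions. -/
theorem star_closed_under_union (X : Type) [TopologicalSpace X] [PolishSpace X]
    (Si : ℕ → Set X) (f : ℕ → X → Tree4) (hf : ∀ i, Continuous (f i))
    (h1 : ∀ i x, AcceptsFrom QC.P (f i x) ↔ x ∈ Si i)
    (h2 : ∀ i x, AcceptsFrom QC.N (f i x) ↔ x ∉ Si i)
    (h3 : ∀ i x, AcceptsFrom QC.TS (f i x)) :
    Continuous (fun x => unionTree (fun i => f i x)) ∧
    (∀ x, AcceptsFrom QC.P (unionTree (fun i => f i x)) ↔ x ∈ ⋃ i, Si i) ∧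
    (∀ x, AcceptsFrom QC.N (unionTree (fun i => f i x)) ↔ x ∉ ⋃ i, Si i) ∧
    (∀ x, AcceptsFrom QC.TS (unionTree (fun i => f i x))) := by
  classical
  set g : X → ℕ → Tree4 := fun x i => f i x with hg
  refine ⟨?_, ?_, ?_, ?_⟩
  · -- continuity
    apply continuous_pi
    intro v
    exact unionTree_continuous v f hf
  · -- P
    intro x
    constructor
    · rintro ⟨ρ, hρ⟩
      by_cases hall : ∀ k, ρ (List.replicate k 0) = QC.P ∨ ρ (List.replicate k 0) = QC.Pv
      · exfalso
        have hb := hρ.2 (fun _ => (0 : Fin 2))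
        have e : (fun n => rankC (ρ (pre (fun _ => (0 : Fin 2)) n))) = fun _ => 1 := by
          funext n
          rw [pre_eq_replicate _ n (fun j _ => rfl)]
          rcases hall n with h | h <;> rw [h] <;> rfl
        rw [e] at hb
        obtain ⟨r, hre, hio, _⟩ := hb
        obtain ⟨n, -, he⟩ := hio 0
        have hr1 : r = 1 := by simpa using he.symm
        subst hr1
        norm_num at hre
      · push_neg at hall
        have hex : ∃ k, ¬(ρ (List.replicate k 0) = QC.P ∨ ρ (List.replicate k 0) = QC.Pv) := by
          obtain ⟨k, h1, h2⟩ := hall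
          exact ⟨k, by tauto⟩
        have hk0pos : Nat.find hex ≠ 0 := by
          intro h
          have hspec := Nat.find_spec hex
          rw [h] at hspec
          exact hspec (Or.inl hρ.1.1)
        obtain ⟨j, hj1⟩ : ∃ j, Nat.find hex = j + 1 := ⟨Nat.find hex - 1, by omega⟩
        have hj : ρ (List.replicate j 0) = QC.P ∨ ρ (List.replicate j 0) = QC.Pv := by
          have := Nat.find_min hex (show j < Nat.find hex by omega)
          tauto
        have hd := hρ.1.2 (List.replicate j 0)
        rw [unionTree_replicate] at hd
        have hd' : (ρ (List.replicate j 0 ++ [0]) = QC.Tv ∧ ρ (List.replicate j 0 ++ [1]) = QC.P) ∨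
            (ρ (List.replicate j 0 ++ [0]) = QC.Pv ∧ ρ (List.replicate j 0 ++ [1]) = QC.N) := by
          rcases hj with h | h <;> rw [h] at hd <;> exact hd
        rcases hd' with ⟨_, hP⟩ | ⟨hPv, _⟩
        · have hacc := acceptsFrom_subtree _ _ _ hρ (List.replicate j 0 ++ [1])
          rw [hP, subtree_eq] at hacc
          exact Set.mem_iUnion.2 ⟨j, (h1 j x).1 hacc⟩
        · exfalso
          have hspec := Nat.find_spec hex
          rw [hj1] at hspec
          rw [← List.replicate_succ'] at hPv
          exact hspec (Or.inr hPv)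
    · intro hx
      have hex : ∃ i, x ∈ Si i := Set.mem_iUnion.1 hx
      set i0 := Nat.find hex with hi0
      set tgt : ℕ → QC := fun k => if k < i0 then QC.N else if k = i0 then QC.P else QC.TS
        with htgt
      have hruns : ∀ k, ∃ ρk, AccRunC (f k x) (tgt k) ρk := by
        intro k
        rcases lt_trichotomy k i0 with h | h | h
        · have hxk : x ∉ Si k := Nat.find_min hex h
          obtain ⟨ρk, hρk⟩ := (h2 k x).2 hxk
          exact ⟨ρk, by simpa [htgt, h] using hρk⟩
        · obtain ⟨ρk, hρk⟩ := (h1 k x).2 (by rw [h]; exact Nat.find_spec hex)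
          exact ⟨ρk, by simpa [htgt, h] using hρk⟩
        · obtain ⟨ρk, hρk⟩ := h3 k x
          exact ⟨ρk, by simpa [htgt, Nat.lt_asymm h, Nat.ne_of_gt h] using hρk⟩
      choose r hr using hruns
      set s : ℕ → QC := fun k => if k ≤ i0 then (if k = 0 then QC.P else QC.Pv) else QC.Tv
        with hsdef
      have hstart : ∀ k, r k [] = tgt k := fun k => (hr k).1.1
      have hacc := glue_acc (fun i => f i x) s r ?_ ?_ ?_
      · simpa [hsdef] using hacc
      · intro k
        rw [hstart k]
        rcases lt_trichotomy k i0 with h | h | h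
        · have e1 : s (k + 1) = QC.Pv := by simp only [hsdef]; split_ifs <;> first | rfl | (exfalso; first | exact ‹False› | omega)
          have e2 : tgt k = QC.N := by simp [htgt, h]
          rw [e1, e2]
          rcases Nat.eq_zero_or_pos k with rfl | hk
          · have : s 0 = QC.P := by simp only [hsdef]; split_ifs <;> first | rfl | (exfalso; first | exact ‹False› | omega)
            rw [this]; exact Or.inr ⟨rfl, rfl⟩
          · have : s k = QC.Pv := by simp only [hsdef]; split_ifs <;> first | rfl | (exfalso; first | exact ‹False› | omega)
            rw [this]; exact Or.inr ⟨rfl, rfl⟩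
        · have e1 : s (k + 1) = QC.Tv := by simp only [hsdef]; split_ifs <;> first | rfl | (exfalso; first | exact ‹False› | omega)
          have e2 : tgt k = QC.P := by simp [htgt, h]
          rw [e1, e2]
          rcases Nat.eq_zero_or_pos k with rfl | hk
          · have : s 0 = QC.P := by simp only [hsdef]; split_ifs <;> first | rfl | (exfalso; first | exact ‹False› | omega)
            rw [this]; exact Or.inl ⟨rfl, rfl⟩
          · have : s k = QC.Pv := by simp only [hsdef]; split_ifs <;> first | rfl | (exfalso; first | exact ‹False› | omega)
            rw [this]; exact Or.inl ⟨rfl, rfl⟩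
        · have e1 : s (k + 1) = QC.Tv := by simp only [hsdef]; split_ifs <;> first | rfl | (exfalso; first | exact ‹False› | omega)
          have e2 : tgt k = QC.TS := by simp [htgt, Nat.lt_asymm h, Nat.ne_of_gt h]
          have e3 : s k = QC.Tv := by simp only [hsdef]; split_ifs <;> first | rfl | (exfalso; first | exact ‹False› | omega)
          rw [e1, e2, e3]
          exact ⟨rfl, rfl⟩
      · intro k
        exact ⟨⟨rfl, (hr k).1.2⟩, (hr k).2⟩
      · apply parityOk_of_eventually_zero _ (i0 + 1)
        intro n hn
        have : s n = QC.Tv := by simp only [hsdef]; split_ifs <;> first | rfl | (exfalso; first | exact ‹False› | omega)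
        rw [this]; rfl
  · -- N
    intro x
    constructor
    · rintro ⟨ρ, hρ⟩
      rw [Set.mem_iUnion]
      push_neg
      intro k
      have spine : ∀ k, ρ (List.replicate k 0) = QC.N ∨ ρ (List.replicate k 0) = QC.Nv := by
        intro k
        induction k with
        | zero => exact Or.inl hρ.1.1
        | succ k ih =>
          have hd := hρ.1.2 (List.replicate k 0)
          rw [unionTree_replicate] at hd
          have hd' : ρ (List.replicate k 0 ++ [0]) = QC.Nv ∧
              ρ (List.replicate k 0 ++ [1]) = QC.N := by
            rcases ih with h | h <;> rw [h] at hd <;> exact hd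
          rw [← List.replicate_succ'] at hd'
          exact Or.inr hd'.1
      have hd := hρ.1.2 (List.replicate k 0)
      rw [unionTree_replicate] at hd
      have hd' : ρ (List.replicate k 0 ++ [0]) = QC.Nv ∧
          ρ (List.replicate k 0 ++ [1]) = QC.N := by
        rcases spine k with h | h <;> rw [h] at hd <;> exact hd
      have hacc := acceptsFrom_subtree _ _ _ hρ (List.replicate k 0 ++ [1])
      rw [hd'.2, subtree_eq] at hacc
      exact (h2 k x).1 hacc
    · intro hx
      rw [Set.mem_iUnion] at hx
      push_neg at hx
      have hruns : ∀ k, ∃ ρk, AccRunC (f k x) QC.N ρk := fun k => (h2 k x).2 (hx k)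
      choose r hr using hruns
      set s : ℕ → QC := fun k => if k = 0 then QC.N else QC.Nv with hsdef
      have hacc := glue_acc (fun i => f i x) s r ?_ ?_ ?_
      · simpa [hsdef] using hacc
      · intro k
        rw [(hr k).1.1]
        rcases Nat.eq_zero_or_pos k with rfl | hk
        · have e1 : s 0 = QC.N := by simp only [hsdef]; split_ifs <;> first | rfl | (exfalso; first | exact ‹False› | omega)
          have e2 : s 1 = QC.Nv := by simp only [hsdef]; split_ifs <;> first | rfl | (exfalso; first | exact ‹False› | omega)
          rw [e1, e2]; exact ⟨rfl, rfl⟩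
        · have e1 : s k = QC.Nv := by simp only [hsdef]; split_ifs <;> first | rfl | (exfalso; first | exact ‹False› | omega)
          have e2 : s (k + 1) = QC.Nv := by simp only [hsdef]; split_ifs <;> first | rfl | (exfalso; first | exact ‹False› | omega)
          rw [e1, e2]; exact ⟨rfl, rfl⟩
      · intro k
        exact ⟨⟨rfl, (hr k).1.2⟩, (hr k).2⟩
      · apply parityOk_of_eventually_zero _ 1
        intro n hn
        have : s n = QC.Nv := by simp only [hsdef]; split_ifs <;> first | rfl | (exfalso; first | exact ‹False› | omega)
        rw [this]; rfl
  · -- TS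
    intro x
    have hruns : ∀ k, ∃ ρk, AccRunC (f k x) QC.TS ρk := fun k => h3 k x
    choose r hr using hruns
    set s : ℕ → QC := fun k => if k = 0 then QC.TS else QC.Tv with hsdef
    have hacc := glue_acc (fun i => f i x) s r ?_ ?_ ?_
    · simpa [hsdef] using hacc
    · intro k
      rw [(hr k).1.1]
      rcases Nat.eq_zero_or_pos k with rfl | hk
      · have e1 : s 0 = QC.TS := by simp only [hsdef]; split_ifs <;> first | rfl | (exfalso; first | exact ‹False› | omega)
        have e2 : s 1 = QC.Tv := by simp only [hsdef]; split_ifs <;> first | rfl | (exfalso; first | exact ‹False› | omega)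
        rw [e1, e2]; exact ⟨rfl, rfl⟩
      · have e1 : s k = QC.Tv := by simp only [hsdef]; split_ifs <;> first | rfl | (exfalso; first | exact ‹False› | omega)
        have e2 : s (k + 1) = QC.Tv := by simp only [hsdef]; split_ifs <;> first | rfl | (exfalso; first | exact ‹False› | omega)
        rw [e1, e2]; exact ⟨rfl, rfl⟩
    · intro k
      exact ⟨⟨rfl, (hr k).1.2⟩, (hr k).2⟩
    · apply parityOk_of_eventually_zero _ 1
      intro n hn
      have : s n = QC.Tv := by simp only [hsdef]; split_ifs <;> first | rfl | (exfalso; first | exact ‹False› | omega)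
      rw [this]; rfl
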